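/- The functions max : ℝ² → ℝ, (a,b) ↦ max(a,b), and min : ℝ² → ℝ, (a,b) ↦ min(a,b), are poly-length-computable. -/

import Mathlib

/-- The length of the curve `y` between times `0` and `t`
(using one-sided derivatives on `[0, ∞)` and the sup norm). -/
noncomputable def curveLen {d : ℕ} (y : ℝ → Fin d → ℝ) (t : ℝ) : ℝ :=
  ∫ u in (0:ℝ)..t, ‖derivWithin y (Set.Ici 0) u‖

/-- `f :⊆ ℝⁿ → ℝᵐ` with domain `dom` is poly-length-computable. -/
def PolyLengthComputable (n m : ℕ) (dom : Set (Fin n → ℝ))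
    (f : (Fin n → ℝ) → Fin m → ℝ) : Prop :=
  ∃ (d : ℕ) (hd : m ≤ d) (p : Fin d → MvPolynomial (Fin d) ℚ)
    (q : Fin d → MvPolynomial (Fin n) ℚ) (Ω : MvPolynomial (Fin 2) ℝ),
    (∀ α μ : ℝ, 0 ≤ α → 0 ≤ μ → 0 ≤ MvPolynomial.eval ![α, μ] Ω) ∧
    ∀ x ∈ dom, ∃ y : ℝ → Fin d → ℝ,
      (∀ i, y 0 i = MvPolynomial.aeval x (q i)) ∧
      (∀ t : ℝ, 0 ≤ t →
        HasDerivWithinAt y (fun i => MvPolynomial.aeval (y t) (p i)) (Set.Ici 0) t) ∧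
      (∀ t : ℝ, 0 ≤ t → ∀ μ : ℝ, 0 ≤ μ →
        MvPolynomial.eval ![‖x‖, μ] Ω ≤ curveLen y t →
        ‖(fun j : Fin m => y t (Fin.castLE hd j)) - f x‖ ≤ Real.exp (-μ)) ∧
      (∀ t : ℝ, 0 ≤ t → t ≤ curveLen y t)

/- ### Auxiliary lemmas about `tanh` -/

lemma myHasDerivAt_tanh (z : ℝ) : HasDerivAt Real.tanh (1 - Real.tanh z ^ 2) z := by
  have h : HasDerivAt (fun w => Real.sinh w / Real.cosh w)
      ((Real.cosh z * Real.cosh z - Real.sinh z * Real.sinh z) / Real.cosh z ^ 2) z :=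
    (Real.hasDerivAt_sinh z).div (Real.hasDerivAt_cosh z) (Real.cosh_pos z).ne'
  simp only [← Real.tanh_eq_sinh_div_cosh] at h
  convert h using 1
  have hz := (Real.cosh_pos z).ne'
  rw [Real.tanh_eq_sinh_div_cosh]
  field_simp

lemma my_continuous_tanh : Continuous Real.tanh :=
  Differentiable.continuous (fun z => (myHasDerivAt_tanh z).differentiableAt)

lemma my_tanh_sq_le_one (z : ℝ) : Real.tanh z ^ 2 ≤ 1 := by
  rw [Real.tanh_eq_sinh_div_cosh, div_pow, div_le_one (pow_pos (Real.cosh_pos z) 2)]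
  nlinarith [Real.cosh_sq_sub_sinh_sq z]

lemma my_tanh_le_one (z : ℝ) : Real.tanh z ≤ 1 := by
  nlinarith [my_tanh_sq_le_one z]

lemma my_one_sub_tanh (z : ℝ) : 1 - Real.tanh z ≤ 2 * Real.exp (-2 * z) := by
  have hc := Real.cosh_pos z
  have h1 : 1 - Real.tanh z = Real.exp (-z) / Real.cosh z := by
    rw [Real.tanh_eq_sinh_div_cosh, ← Real.cosh_sub_sinh]
    field_simp
  rw [h1]
  have h2 : Real.exp z / 2 ≤ Real.cosh z := by
    rw [Real.cosh_eq]
    nlinarith [Real.exp_pos (-z)]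
  have h3 : Real.exp (-z) / Real.cosh z ≤ Real.exp (-z) / (Real.exp z / 2) :=
    div_le_div_of_nonneg_left (Real.exp_pos _).le (by positivity) h2
  refine h3.trans (le_of_eq ?_)
  rw [div_eq_iff (by positivity : (Real.exp z / 2) ≠ 0)]
  rw [show -z = -2*z + z by ring, Real.exp_add]
  ring

lemma my_odd_tanh (c τ : ℝ) : c * Real.tanh (c * τ) = |c| * Real.tanh (|c| * τ) := by
  rcases abs_cases c with ⟨h, _⟩ | ⟨h, _⟩
  · rw [h]
  · rw [h, neg_mul, show -c * τ = -(c * τ) by ring, Real.tanh_neg]; ring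

lemma my_max_eq (a b : ℝ) : max a b = (a + b) / 2 + (1:ℝ) * (|a - b| / 2) := by
  rcases le_total a b with h | h
  · rw [abs_of_nonpos (by linarith), max_eq_right h]; ring
  · rw [abs_of_nonneg (by linarith), max_eq_left h]; ring

lemma my_min_eq (a b : ℝ) : min a b = (a + b) / 2 + (-1:ℝ) * (|a - b| / 2) := by
  rcases le_total a b with h | h
  · rw [abs_of_nonpos (by linarith), min_eq_left h]; ring
  · rw [abs_of_nonneg (by linarith), min_eq_right h]; ring

/- ### The curve computing `(a+b)/2 + ε·|a-b|/2` and its derivative -/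

noncomputable def Yc (ε a b : ℝ) (t : ℝ) : Fin 5 → ℝ :=
  ![(a+b)/2 + ε * ((a-b)/2) * Real.tanh ((a-b)*(Real.exp t - 1)),
    a-b,
    (a-b) * Real.exp t,
    Real.tanh ((a-b)*(Real.exp t - 1)),
    t]

noncomputable def Vc (ε a b : ℝ) (t : ℝ) : Fin 5 → ℝ :=
  ![ε * ((a-b)/2) * ((1 - Real.tanh ((a-b)*(Real.exp t - 1)) ^ 2) * ((a-b) * Real.exp t)),
    0,
    (a-b) * Real.exp t,
    (1 - Real.tanh ((a-b)*(Real.exp t - 1)) ^ 2) * ((a-b) * Real.exp t),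
    1]

lemma g_hasDerivAt (a b t : ℝ) :
    HasDerivAt (fun t => Real.tanh ((a-b)*(Real.exp t - 1)))
      ((1 - Real.tanh ((a-b)*(Real.exp t - 1)) ^ 2) * ((a-b) * Real.exp t)) t := by
  have hin : HasDerivAt (fun t => (a-b)*(Real.exp t - 1)) ((a-b) * Real.exp t) t :=
    ((Real.hasDerivAt_exp t).sub_const 1).const_mul (a-b)
  exact (myHasDerivAt_tanh _).comp t hin

lemma Yc_hasDerivAt (ε a b t : ℝ) : HasDerivAt (Yc ε a b) (Vc ε a b t) t := by
  rw [hasDerivAt_pi]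
  intro i
  fin_cases i
  · simpa [Yc, Vc] using (((g_hasDerivAt a b t).const_mul (ε * ((a-b)/2))).const_add ((a+b)/2))
  · simpa [Yc, Vc] using (hasDerivAt_const t (a-b))
  · simpa [Yc, Vc] using ((Real.hasDerivAt_exp t).const_mul (a-b))
  · simpa [Yc, Vc] using (g_hasDerivAt a b t)
  · simpa [Yc, Vc] using (hasDerivAt_id' t)

/- ### Bounds on the speed -/

lemma Vc_cont (ε a b : ℝ) : Continuous (fun t => Vc ε a b t) := by
  unfold Vc
  refine continuous_pi ?_
  intro i
  have hg : Continuous (fun t : ℝ => Real.tanh ((a-b)*(Real.exp t - 1))) :=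
    my_continuous_tanh.comp (by fun_prop)
  fin_cases i <;> simp <;> fun_prop

lemma Vc_norm_cont (ε a b : ℝ) : Continuous (fun t => ‖Vc ε a b t‖) :=
  (Vc_cont ε a b).norm

lemma Vc_norm_lower (ε a b t : ℝ) : 1 ≤ ‖Vc ε a b t‖ := by
  have h := norm_le_pi_norm (Vc ε a b t) 4
  simpa [Vc] using h

lemma Vc_norm_upper (ε a b t : ℝ) (hε : |ε| ≤ 1) :
    ‖Vc ε a b t‖ ≤ 1 + (|a-b| + (a-b)^2) * Real.exp t := by
  have hexp := Real.exp_pos t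
  have h1 : (0:ℝ) ≤ 1 + (|a-b| + (a-b)^2) * Real.exp t := by positivity
  rw [pi_norm_le_iff_of_nonneg h1]
  intro i
  have htsq := my_tanh_sq_le_one ((a-b)*(Real.exp t - 1))
  have habs : |a - b| * Real.exp t ≤ (|a-b| + (a-b)^2) * Real.exp t := by
    nlinarith [abs_nonneg (a-b)]
  have hsq : (a-b)^2 = |a-b|^2 := (sq_abs (a-b)).symm
  have hT0 : (0:ℝ) ≤ 1 - Real.tanh ((a-b)*(Real.exp t - 1)) ^ 2 := by linarith
  have hT : |1 - Real.tanh ((a-b)*(Real.exp t - 1)) ^ 2| ≤ 1 := by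
    rw [abs_of_nonneg hT0]; nlinarith [sq_nonneg (Real.tanh ((a-b)*(Real.exp t - 1)))]
  fin_cases i <;> simp [Vc, Real.norm_eq_abs]
  · have h2 : |ε| * (|a-b|/2) * (|1 - Real.tanh ((a-b)*(Real.exp t - 1)) ^ 2| * (|a-b| * Real.exp t)) ≤ 1 * (|a-b|/2) * (1 * (|a-b| * Real.exp t)) := by
      gcongr
    have h3 : |a-b| * |a-b| = (a-b)^2 := by rw [← sq, sq_abs]
    nlinarith [abs_nonneg (a-b), hexp.le]
  · positivity
  · nlinarith [abs_nonneg (a-b)]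
  · have h2 : |1 - Real.tanh ((a-b)*(Real.exp t - 1)) ^ 2| * (|a-b| * Real.exp t) ≤ 1 * (|a-b| * Real.exp t) := by
      gcongr
    nlinarith [abs_nonneg (a-b)]
  · nlinarith [abs_nonneg (a-b)]

/- ### Length bounds -/

lemma Yc_derivWithin (ε a b : ℝ) {u : ℝ} (hu : u ∈ Set.Ici (0:ℝ)) :
    derivWithin (Yc ε a b) (Set.Ici 0) u = Vc ε a b u :=
  ((Yc_hasDerivAt ε a b u).hasDerivWithinAt).derivWithin ((uniqueDiffOn_Ici 0) u hu)

lemma Yc_curveLen (ε a b : ℝ) {t : ℝ} (ht : 0 ≤ t) :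
    curveLen (Yc ε a b) t = ∫ u in (0:ℝ)..t, ‖Vc ε a b u‖ := by
  unfold curveLen
  apply intervalIntegral.integral_congr
  intro u hu
  rw [Set.uIcc_of_le ht] at hu
  simp only [Yc_derivWithin ε a b hu.1]

lemma Yc_len_lower (ε a b : ℝ) {t : ℝ} (ht : 0 ≤ t) : t ≤ curveLen (Yc ε a b) t := by
  rw [Yc_curveLen ε a b ht]
  have h1 : (∫ u in (0:ℝ)..t, (1:ℝ)) = t := by simp
  calc t = ∫ u in (0:ℝ)..t, (1:ℝ) := h1.symm
    _ ≤ ∫ u in (0:ℝ)..t, ‖Vc ε a b u‖ :=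
      intervalIntegral.integral_mono_on ht intervalIntegrable_const
        ((Vc_norm_cont ε a b).intervalIntegrable 0 t) (fun u _ => Vc_norm_lower ε a b u)

lemma Yc_len_upper (ε a b : ℝ) (hε : |ε| ≤ 1) {t : ℝ} (ht : 0 ≤ t) :
    curveLen (Yc ε a b) t ≤ t + (|a-b| + (a-b)^2) * (Real.exp t - 1) := by
  rw [Yc_curveLen ε a b ht]
  have h1 : (∫ u in (0:ℝ)..t, (1 + (|a-b| + (a-b)^2) * Real.exp u)) =
      t + (|a-b| + (a-b)^2) * (Real.exp t - 1) := by
    rw [intervalIntegral.integral_add intervalIntegrable_const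
      ((by fun_prop : Continuous fun u : ℝ => (|a-b| + (a-b)^2) * Real.exp u).intervalIntegrable 0 t)]
    rw [intervalIntegral.integral_const_mul, integral_exp]
    simp
  calc (∫ u in (0:ℝ)..t, ‖Vc ε a b u‖)
      ≤ ∫ u in (0:ℝ)..t, (1 + (|a-b| + (a-b)^2) * Real.exp u) :=
        intervalIntegral.integral_mono_on ht
          ((Vc_norm_cont ε a b).intervalIntegrable 0 t)
          ((by fun_prop : Continuous fun u : ℝ => 1 + (|a-b| + (a-b)^2) * Real.exp u).intervalIntegrable 0 t)
          (fun u _ => Vc_norm_upper ε a b u hε)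
    _ = t + (|a-b| + (a-b)^2) * (Real.exp t - 1) := h1

/- ### The polynomials -/

noncomputable def pc (ε : ℚ) : Fin 5 → MvPolynomial (Fin 5) ℚ :=
  ![MvPolynomial.C (ε/2) * MvPolynomial.X 1 *
      ((1 - MvPolynomial.X 3 ^ 2) * MvPolynomial.X 2),
    0, MvPolynomial.X 2,
    (1 - MvPolynomial.X 3 ^ 2) * MvPolynomial.X 2, 1]

noncomputable def qc : Fin 5 → MvPolynomial (Fin 2) ℚ :=
  ![MvPolynomial.C (1/2) * (MvPolynomial.X 0 + MvPolynomial.X 1),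
    MvPolynomial.X 0 - MvPolynomial.X 1,
    MvPolynomial.X 0 - MvPolynomial.X 1, 0, 0]

noncomputable def Ωmm : MvPolynomial (Fin 2) ℝ :=
  (1 + MvPolynomial.C 2 * MvPolynomial.X 0) *
    (MvPolynomial.C 2 * MvPolynomial.X 1 + MvPolynomial.C 8 * MvPolynomial.X 0 +
      MvPolynomial.C 3)

lemma Ωmm_eval (α μ : ℝ) :
    MvPolynomial.eval ![α, μ] Ωmm = (1 + 2*α) * (2*μ + 8*α + 3) := by simp [Ωmm]


lemma aux_numeric (α μ t c τ : ℝ) (hα : 0 ≤ α) (hμ : 0 ≤ μ) (ht : 0 ≤ t)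
    (hτ0 : 0 ≤ τ) (hτe : τ = Real.exp t - 1) (hc2α : |c| ≤ 2 * α)
    (hL : (1 + 2*α) * (2*μ + 8*α + 3) ≤ t + (|c| + c^2) * τ) :
    |c| * Real.exp (-2 * (|c| * τ)) ≤ Real.exp (-μ) := by
  by_cases hcase : (1 + 2*α) * (2*μ + 8*α + 3) / 2 ≤ t
  · -- the time itself is large
    have ht1 : (1:ℝ) ≤ t := by nlinarith
    have htμ : μ + 3/2 ≤ t := by nlinarith
    have hexp2 : (2:ℝ) ≤ Real.exp t := by
      have h4 : (2:ℝ) ≤ Real.exp 1 := by nlinarith [Real.add_one_le_exp (1:ℝ)]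
      exact h4.trans (Real.exp_le_exp.2 ht1)
    have hτpos : 0 < τ := by rw [hτe]; linarith
    have hz0 : 0 ≤ |c| * τ := mul_nonneg (abs_nonneg c) hτ0
    have step1 : |c| * Real.exp (-2 * (|c| * τ)) ≤ 1/τ := by
      have hzexp : |c| * τ ≤ Real.exp (|c| * τ) := by
        nlinarith [Real.add_one_le_exp (|c| * τ)]
      have e1 : Real.exp (-2 * (|c| * τ)) ≤ Real.exp (-(|c| * τ)) :=
        Real.exp_le_exp.2 (by linarith)
      calc |c| * Real.exp (-2 * (|c| * τ)) ≤ |c| * Real.exp (-(|c| * τ)) := by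
            have := abs_nonneg c
            gcongr
        _ = |c| / Real.exp (|c| * τ) := by rw [Real.exp_neg]; ring
        _ ≤ 1/τ := by
            rw [div_le_div_iff₀ (Real.exp_pos _) hτpos]
            nlinarith
    have step2 : 1/τ ≤ 2 * Real.exp (-t) := by
      have hexppos := Real.exp_pos t
      rw [Real.exp_neg, div_le_iff₀ hτpos]
      rw [show 2 * (Real.exp t)⁻¹ * τ = (2 * τ) / Real.exp t by ring]
      rw [le_div_iff₀ hexppos, hτe]
      nlinarith
    have step3 : 2 * Real.exp (-t) ≤ Real.exp (-μ) := by
      have h5 : Real.exp (-t) ≤ Real.exp (-μ - 3/2) := Real.exp_le_exp.2 (by linarith)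
      have h6 : Real.exp (-μ - 3/2) = Real.exp (-μ) * Real.exp (-(3/2):ℝ) := by
        rw [← Real.exp_add]; ring_nf
      have h25 : (2:ℝ) ≤ Real.exp ((3/2):ℝ) := by nlinarith [Real.add_one_le_exp ((3/2):ℝ)]
      have hme : Real.exp (-(3/2):ℝ) * Real.exp ((3/2):ℝ) = 1 := by
        rw [← Real.exp_add]; norm_num
      nlinarith [Real.exp_pos (-(3/2):ℝ), Real.exp_pos (-μ)]
    linarith
  · -- the trajectory of the coordinate c·exp(t) is long
    push_neg at hcase
    by_cases hc0 : c = 0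
    · rw [hc0, abs_zero, zero_mul]
      positivity
    have hcpos : 0 < |c| := abs_pos.2 hc0
    have hkey : (1 + 2*α) * (2*μ + 8*α + 3) ≤ (1 + 2*α) * (2 * (|c| * τ)) := by
      have h7 : (1 + 2*α) * (2*μ + 8*α + 3) - t ≤ (|c| + c^2) * τ := by linarith
      have hCub : (|c| + c^2) * τ = |c| * τ * (1 + |c|) := by
        rw [← sq_abs]; ring
      have h8 : |c| * τ * (1 + |c|) ≤ |c| * τ * (1 + 2*α) := by
        have h9 : 0 ≤ |c| * τ := mul_nonneg (abs_nonneg c) hτ0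
        nlinarith
      nlinarith
    have hz : 2*μ + 8*α + 3 ≤ 2 * (|c| * τ) :=
      le_of_mul_le_mul_left hkey (by positivity)
    have e2 : |c| ≤ Real.exp (2*α) := by
      nlinarith [Real.add_one_le_exp (2*α)]
    calc |c| * Real.exp (-2 * (|c| * τ))
        ≤ Real.exp (2*α) * Real.exp (-(2*μ + 8*α + 3)) := by
          apply mul_le_mul e2 (Real.exp_le_exp.2 (by linarith)) (Real.exp_pos _).le
            (Real.exp_pos _).le
      _ = Real.exp (2*α - (2*μ + 8*α + 3)) := by rw [← Real.exp_add]; ring_nf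
      _ ≤ Real.exp (-μ) := Real.exp_le_exp.2 (by linarith)

/- ### The main auxiliary theorem -/

lemma aux_main (ε : ℚ) (hε : ε = 1 ∨ ε = -1) :
    PolyLengthComputable 2 1 Set.univ
      (fun v _ => (v 0 + v 1)/2 + (ε:ℝ) * (|v 0 - v 1|/2)) := by
  have hεabs : |(ε:ℝ)| = 1 := by rcases hε with h | h <;> rw [h] <;> norm_num
  have hεle : |(ε:ℝ)| ≤ 1 := le_of_eq hεabs
  refine ⟨5, by norm_num, pc ε, qc, Ωmm, ?_, ?_⟩
  · intro α μ hα hμ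
    rw [Ωmm_eval]
    positivity
  intro x _
  set a := x 0 with ha
  set b := x 1 with hb
  refine ⟨Yc (ε:ℝ) a b, ?_, ?_, ?_, fun t ht => Yc_len_lower (ε:ℝ) a b ht⟩
  · -- initial conditions
    intro i
    fin_cases i <;> simp [Yc, qc, Real.exp_zero] <;> push_cast <;> ring_nf <;> tauto
  · -- differential equation
    intro t ht
    have hEq : (fun i => MvPolynomial.aeval (Yc (ε:ℝ) a b t) (pc ε i)) = Vc (ε:ℝ) a b t := by
      funext i
      fin_cases i <;> simp [Yc, Vc, pc] <;> push_cast <;> ring_nf <;> tauto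
    rw [hEq]
    exact (Yc_hasDerivAt (ε:ℝ) a b t).hasDerivWithinAt
  · -- error bound
    intro t ht μ hμ hlen
    rw [Ωmm_eval] at hlen
    set α := ‖x‖ with hαdef
    have hα : 0 ≤ α := norm_nonneg x
    set c : ℝ := a - b with hc
    set τ : ℝ := Real.exp t - 1 with hτ
    have hτ0 : 0 ≤ τ := by
      have := Real.add_one_le_exp t; rw [hτ]; linarith
    have hc2α : |c| ≤ 2 * α := by
      have h0 : |x 0| ≤ ‖x‖ := by
        simpa [Real.norm_eq_abs] using norm_le_pi_norm x 0
      have h1 : |x 1| ≤ ‖x‖ := by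
        simpa [Real.norm_eq_abs] using norm_le_pi_norm x 1
      calc |c| ≤ |x 0| + |x 1| := abs_sub _ _
        _ ≤ 2 * α := by linarith
    rw [pi_norm_le_iff_of_nonneg (Real.exp_pos (-μ)).le]
    intro j
    fin_cases j
    show |Yc (ε:ℝ) a b t 0 - ((a+b)/2 + (ε:ℝ) * (|a-b|/2))| ≤ Real.exp (-μ)
    have hY0 : Yc (ε:ℝ) a b t 0 = (a+b)/2 + (ε:ℝ) * (c/2) * Real.tanh (c * τ) := by
      simp [Yc, hc, hτ]
    rw [hY0]
    have htanh := my_tanh_le_one (|c| * τ)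
    -- the error is (|c|/2)(1 - tanh(|c|τ))
    have herr : |(a+b)/2 + (ε:ℝ) * (c/2) * Real.tanh (c*τ) - ((a+b)/2 + (ε:ℝ) * (|a - b|/2))|
        = |c|/2 * (1 - Real.tanh (|c| * τ)) := by
      have h2 : (a+b)/2 + (ε:ℝ) * (c/2) * Real.tanh (c*τ) - ((a+b)/2 + (ε:ℝ) * (|a - b|/2))
          = (ε:ℝ)/2 * (|c| * Real.tanh (|c| * τ) - |c|) := by
        rw [← my_odd_tanh c τ, ← hc]; ring
      rw [h2, abs_mul, abs_div, hεabs, abs_two,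
        abs_of_nonpos (show |c| * Real.tanh (|c| * τ) - |c| ≤ 0 by nlinarith [abs_nonneg c])]
      ring
    rw [herr]
    have herr2 : |c|/2 * (1 - Real.tanh (|c| * τ)) ≤ |c| * Real.exp (-2 * (|c| * τ)) := by
      have h3 := my_one_sub_tanh (|c| * τ)
      nlinarith [abs_nonneg c, Real.exp_pos (-2 * (|c| * τ))]
    refine herr2.trans ?_
    have hub := Yc_len_upper (ε:ℝ) a b hεle ht
    rw [← hc, ← hτ] at hub
    exact aux_numeric α μ t c τ hα hμ ht hτ0 hτ hc2α (hlen.trans hub)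

/-- The binary maximum and minimum functions ℝ² → ℝ are poly-length-computable. -/
theorem max_min_polyLengthComputable :
    PolyLengthComputable 2 1 Set.univ (fun v _ => max (v 0) (v 1)) ∧
    PolyLengthComputable 2 1 Set.univ (fun v _ => min (v 0) (v 1)) := by
  constructor
  · have h1 := aux_main 1 (Or.inl rfl)
    have h2 : (fun (v : Fin 2 → ℝ) (_ : Fin 1) => max (v 0) (v 1)) =
        (fun v _ => (v 0 + v 1)/2 + ((1:ℚ):ℝ) * (|v 0 - v 1|/2)) := by
      funext v j
      push_cast
      exact my_max_eq (v 0) (v 1)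
    rw [h2]
    exact h1
  · have h1 := aux_main (-1) (Or.inr rfl)
    have h2 : (fun (v : Fin 2 → ℝ) (_ : Fin 1) => min (v 0) (v 1)) =
        (fun v _ => (v 0 + v 1)/2 + ((-1:ℚ):ℝ) * (|v 0 - v 1|/2)) := by
      funext v j
      push_cast
      exact my_min_eq (v 0) (v 1)
    rw [h2]
    exact h1
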